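/- Let w₀ ∈ ℂ with w₀ ≠ 0, and let (σ⁰, σ¹), (τ⁰, τ¹) ∈ ℂ² with (σ⁰, σ¹) ≠ (0, 0). If σ⁰ θ⁰(w₀) + σ¹ θ¹(w₀) = 0 and τ⁰ θ⁰(w₀) + τ¹ θ¹(w₀) = 0, then there exists c ∈ ℂ with (τ⁰, τ¹) = (c·σ⁰, c·σ¹). -/

import Mathlib

open Complex Filter Topology

set_option maxHeartbeats 1000000

noncomputable section

namespace ThetaAux

/-- Term of the auxiliary theta series `T0`. -/
def g0 (E w : ℂ) (n : ℤ) : ℂ := w ^ (2 * n) * Complex.exp ((n : ℂ) ^ 2 * E)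

/-- Term of the auxiliary theta series `T1` (with the factor `exp (E/4)` removed). -/
def g1 (E w : ℂ) (n : ℤ) : ℂ := w ^ (2 * n + 1) * Complex.exp (((n : ℂ) ^ 2 + n) * E)

def T0 (E w : ℂ) : ℂ := ∑' n : ℤ, g0 E w n

def T1 (E w : ℂ) : ℂ := ∑' n : ℤ, g1 E w n

lemma T0_def (E w : ℂ) : T0 E w = ∑' n : ℤ, g0 E w n := rfl

lemma T1_def (E w : ℂ) : T1 E w = ∑' n : ℤ, g1 E w n := rfl

/-! ### Summability -/

lemma norm_term (E w : ℂ) (a b n : ℤ) :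
    ‖w ^ (2 * n + a) * Complex.exp (((n : ℂ) ^ 2 + (b : ℂ) * n) * E)‖
      = ‖w‖ ^ (2 * n + a) * Real.exp (((n ^ 2 + b * n : ℤ) : ℝ) * E.re) := by
  have h1 : ((n : ℂ) ^ 2 + (b : ℂ) * n) = ((n ^ 2 + b * n : ℤ) : ℂ) := by push_cast; ring
  rw [norm_mul, norm_zpow, h1]
  congr 1
  rw [Complex.norm_exp]
  rw [show ((n ^ 2 + b * n : ℤ) : ℂ) = (((n ^ 2 + b * n : ℤ) : ℝ) : ℂ) from by push_cast; ring,
    Complex.re_ofReal_mul]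

/-- A ratio test helper. -/
lemma summable_of_ratio_shape {g : ℕ → ℝ} (B t : ℝ) (ht0 : 0 ≤ t) (ht1 : t < 1)
    (hg : ∀ n, |g (n + 1)| ≤ B * t ^ n * |g n|) : Summable g := by
  apply summable_of_ratio_norm_eventually_le (r := 1 / 2) (by norm_num)
  have h2 : Filter.Tendsto (fun n : ℕ => B * t ^ n) atTop (nhds 0) := by
    simpa using (tendsto_pow_atTop_nhds_zero_of_lt_one ht0 ht1).const_mul B
  have h3 : ∀ᶠ n : ℕ in atTop, B * t ^ n < 1 / 2 :=
    h2.eventually_lt_const (by norm_num)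
  filter_upwards [h3] with n hn
  have h4 := hg n
  have h5 : B * t ^ n * |g n| ≤ 1 / 2 * |g n| :=
    mul_le_mul_of_nonneg_right hn.le (abs_nonneg _)
  calc ‖g (n + 1)‖ = |g (n + 1)| := rfl
    _ ≤ B * t ^ n * |g n| := h4
    _ ≤ 1 / 2 * |g n| := h5
    _ = 1 / 2 * ‖g n‖ := rfl

lemma exp_zpow_cancel {x : ℝ} (hx : x ≠ 0) (A B C : ℝ) (h : A + B + C = 0) :
    x ^ (-2 : ℤ) * Real.exp A * (Real.exp B * (x ^ (2 : ℤ) * Real.exp C)) = 1 := by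
  have hz : x ^ (-2 : ℤ) * x ^ (2 : ℤ) = 1 := by
    rw [← zpow_add₀ hx]
    norm_num
  have he : Real.exp A * Real.exp B * Real.exp C = 1 := by
    have h0 : A + B + C = 0 := by linarith
    rw [← Real.exp_add, ← Real.exp_add, h0, Real.exp_zero]
  calc x ^ (-2 : ℤ) * Real.exp A * (Real.exp B * (x ^ (2 : ℤ) * Real.exp C))
      = x ^ (-2 : ℤ) * x ^ (2 : ℤ) * (Real.exp A * Real.exp B * Real.exp C) := by ring
    _ = 1 := by rw [hz, he, one_mul]

lemma summable_norm_aux {E : ℂ} (hE : E.re < 0) {w : ℂ} (hw : w ≠ 0) (a b : ℤ) :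
    Summable (fun n : ℤ => ‖w ^ (2 * n + a) * Complex.exp (((n : ℂ) ^ 2 + (b : ℂ) * n) * E)‖) := by
  have hwn : ‖w‖ ≠ 0 := norm_ne_zero_iff.2 hw
  have hwpos : 0 < ‖w‖ := norm_pos_iff.2 hw
  set N : ℤ → ℝ := fun n => ‖w‖ ^ (2 * n + a) * Real.exp (((n ^ 2 + b * n : ℤ) : ℝ) * E.re)
    with hN
  set C : ℤ → ℝ := fun m => ‖w‖ ^ (2 : ℤ) * Real.exp (((2 * m + 1 + b : ℤ) : ℝ) * E.re)
    with hC
  have hNpos : ∀ m : ℤ, 0 < N m := fun m =>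
    mul_pos (zpow_pos hwpos _) (Real.exp_pos _)
  have key : ∀ m : ℤ, N (m + 1) = C m * N m := by
    intro m
    have e1 : ‖w‖ ^ (2 * (m + 1) + a) = ‖w‖ ^ (2 * m + a) * ‖w‖ ^ (2 : ℤ) := by
      rw [← zpow_add₀ hwn]
      congr 1
      ring
    have e2 : (((m + 1) ^ 2 + b * (m + 1) : ℤ) : ℝ) * E.re
        = ((m ^ 2 + b * m : ℤ) : ℝ) * E.re + ((2 * m + 1 + b : ℤ) : ℝ) * E.re := by
      push_cast
      ring
    rw [hN, hC]
    simp only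
    rw [e1, e2, Real.exp_add]
    ring
  have hre1 : Real.exp (2 * E.re) < 1 := by
    rw [Real.exp_lt_one_iff]
    linarith
  have hre1' : (0 : ℝ) ≤ Real.exp (2 * E.re) := (Real.exp_pos _).le
  have hpow : ∀ n : ℕ, Real.exp (2 * E.re) ^ n = Real.exp ((2 * (n : ℝ)) * E.re) := by
    intro n
    rw [← Real.exp_nat_mul]
    congr 1
    ring
  have hpos : Summable fun n : ℕ => N n := by
    apply summable_of_ratio_shape (‖w‖ ^ (2 : ℤ) * Real.exp (((1 + b : ℤ) : ℝ) * E.re))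
      (Real.exp (2 * E.re)) hre1' hre1
    intro n
    have h1 := key n
    have h2 : ((n : ℤ) + 1) = ((n + 1 : ℕ) : ℤ) := by push_cast; ring
    rw [h2] at h1
    rw [abs_of_pos (hNpos _), abs_of_pos (hNpos _), h1]
    refine le_of_eq ?_
    have h3 : ‖w‖ ^ (2 : ℤ) * Real.exp (((1 + b : ℤ) : ℝ) * E.re) * Real.exp (2 * E.re) ^ n
        = C n := by
      rw [hpow, hC]
      simp only
      rw [mul_assoc, ← Real.exp_add]
      congr 2
      push_cast
      ring
    rw [h3]
  have hneg : Summable fun n : ℕ => N (-(n + 1)) := by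
    apply summable_of_ratio_shape (‖w‖ ^ (-2 : ℤ) * Real.exp (((3 - b : ℤ) : ℝ) * E.re))
      (Real.exp (2 * E.re)) hre1' hre1
    intro n
    have h1 := key (-((n : ℤ) + 2))
    have h2 : (-((n : ℤ) + 2) + 1) = -(((n : ℕ) : ℤ) + 1) := by ring
    have h3 : -((n : ℤ) + 2) = -(((n + 1 : ℕ) : ℤ) + 1) := by push_cast; ring
    rw [h2, h3] at h1
    rw [abs_of_pos (hNpos _), abs_of_pos (hNpos _)]
    refine le_of_eq ?_
    have hprod : ‖w‖ ^ (-2 : ℤ) * Real.exp (((3 - b : ℤ) : ℝ) * E.re)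
        * (Real.exp (2 * E.re) ^ n * C (-(((n + 1 : ℕ) : ℤ) + 1))) = 1 := by
      rw [hpow, hC]
      simp only
      apply exp_zpow_cancel hwn
      push_cast
      ring
    calc N (-(((n + 1 : ℕ) : ℤ) + 1)) = 1 * N (-(((n + 1 : ℕ) : ℤ) + 1)) := (one_mul _).symm
      _ = ‖w‖ ^ (-2 : ℤ) * Real.exp (((3 - b : ℤ) : ℝ) * E.re) * Real.exp (2 * E.re) ^ n
          * (C (-(((n + 1 : ℕ) : ℤ) + 1)) * N (-(((n + 1 : ℕ) : ℤ) + 1))) := by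
          rw [← hprod]; ring
      _ = ‖w‖ ^ (-2 : ℤ) * Real.exp (((3 - b : ℤ) : ℝ) * E.re) * Real.exp (2 * E.re) ^ n
          * N (-(((n : ℕ) : ℤ) + 1)) := by rw [← h1]
  refine (Summable.of_nat_of_neg_add_one hpos hneg).congr ?_
  intro n
  exact (norm_term E w a b n).symm

lemma summable_norm_g0 {E : ℂ} (hE : E.re < 0) {w : ℂ} (hw : w ≠ 0) :
    Summable (fun n : ℤ => ‖g0 E w n‖) := by
  have := summable_norm_aux hE hw 0 0
  simpa [g0] using this

lemma summable_norm_g1 {E : ℂ} (hE : E.re < 0) {w : ℂ} (hw : w ≠ 0) :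
    Summable (fun n : ℤ => ‖g1 E w n‖) := by
  have := summable_norm_aux hE hw 1 1
  simpa [g1] using this

lemma summable_g0 {E : ℂ} (hE : E.re < 0) {w : ℂ} (hw : w ≠ 0) : Summable (g0 E w) :=
  (summable_norm_g0 hE hw).of_norm

lemma summable_g1 {E : ℂ} (hE : E.re < 0) {w : ℂ} (hw : w ≠ 0) : Summable (g1 E w) :=
  (summable_norm_g1 hE hw).of_norm

/-! ### Reindexing equivalences -/

/-- Splitting `ℤ × ℤ` into pairs with even/odd coordinate sum, for theta products. -/
def sq0 : Bool × (ℤ × ℤ) ≃ ℤ × ℤ where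
  toFun p := match p with
    | (false, s, d) => (s + d, s - d)
    | (true, s, d) => (s + d + 1, s - d)
  invFun p := if 2 ∣ (p.1 + p.2) then (false, ((p.1 + p.2) / 2, (p.1 - p.2) / 2))
    else (true, ((p.1 + p.2 - 1) / 2, (p.1 - p.2 - 1) / 2))
  left_inv := by
    rintro ⟨b, s, d⟩
    cases b <;> dsimp only <;> split_ifs with h <;> simp_all [Prod.ext_iff] <;> omega
  right_inv := by
    rintro ⟨m, n⟩
    dsimp only
    split_ifs with h <;> simp_all [Prod.ext_iff] <;> omega

def sq1 : Bool × (ℤ × ℤ) ≃ ℤ × ℤ where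
  toFun p := match p with
    | (false, s, d) => (s + d, s - d)
    | (true, s, d) => (s + d, s - d - 1)
  invFun p := if 2 ∣ (p.1 + p.2) then (false, ((p.1 + p.2) / 2, (p.1 - p.2) / 2))
    else (true, ((p.1 + p.2 + 1) / 2, (p.1 - p.2 - 1) / 2))
  left_inv := by
    rintro ⟨b, s, d⟩
    cases b <;> dsimp only <;> split_ifs with h <;> simp_all [Prod.ext_iff] <;> omega
  right_inv := by
    rintro ⟨m, n⟩
    dsimp only
    split_ifs with h <;> simp_all [Prod.ext_iff] <;> omega

/-- Splitting `ℤ` into even and odd integers. -/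
def psq : Bool × ℤ ≃ ℤ where
  toFun p := match p with
    | (false, n) => 2 * n
    | (true, n) => 2 * n + 1
  invFun m := if 2 ∣ m then (false, m / 2) else (true, (m - 1) / 2)
  left_inv := by
    rintro ⟨b, n⟩
    cases b <;> dsimp only <;> split_ifs with h <;> simp_all [Prod.ext_iff] <;> omega
  right_inv := by
    intro m
    dsimp only
    split_ifs with h <;> simp_all [Prod.ext_iff] <;> omega

lemma tsum_split {γ : Type*} (e : Bool × γ ≃ ℤ × ℤ) (F : ℤ × ℤ → ℂ) (hF : Summable F) :
    ∑' p : ℤ × ℤ, F p = (∑' p : γ, F (e (false, p))) + ∑' p : γ, F (e (true, p)) := by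
  have hs : Summable (fun p : Bool × γ => F (e p)) := e.summable_iff.2 hF
  rw [← e.tsum_eq F, Summable.tsum_prod' hs hs.prod_factor, tsum_bool]

lemma tsum_split' (e : Bool × ℤ ≃ ℤ) (F : ℤ → ℂ) (hF : Summable F) :
    ∑' n : ℤ, F n = (∑' n : ℤ, F (e (false, n))) + ∑' n : ℤ, F (e (true, n)) := by
  have hs : Summable (fun p : Bool × ℤ => F (e p)) := e.summable_iff.2 hF
  rw [← e.tsum_eq F, Summable.tsum_prod' hs hs.prod_factor, tsum_bool]

/-! ### The two product identities -/

lemma identity0 {E : ℂ} (hE : E.re < 0) {u v : ℂ} (hu : u ≠ 0) (hv : v ≠ 0) :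
    T0 E u * T0 E v
      = T0 (2 * E) (u * v) * T0 (2 * E) (u / v)
        + Complex.exp E * (T1 (2 * E) (u * v) * T1 (2 * E) (u / v)) := by
  have h2E : (2 * E).re < 0 := by
    have h : (2 * E).re = 2 * E.re := by simp [Complex.mul_re]
    rw [h]; linarith
  have huv : u * v ≠ 0 := mul_ne_zero hu hv
  have huv' : u / v ≠ 0 := div_ne_zero hu hv
  have hF : Summable (fun z : ℤ × ℤ => g0 E u z.1 * g0 E v z.2) :=
    summable_mul_of_summable_norm (summable_norm_g0 hE hu) (summable_norm_g0 hE hv)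
  rw [T0_def E u, T0_def E v,
    tsum_mul_tsum_of_summable_norm (summable_norm_g0 hE hu) (summable_norm_g0 hE hv),
    tsum_split sq0 _ hF]
  obtain ⟨α, rfl⟩ : ∃ α, Complex.exp α = u := ⟨Complex.log u, Complex.exp_log hu⟩
  obtain ⟨β, rfl⟩ : ∃ β, Complex.exp β = v := ⟨Complex.log v, Complex.exp_log hv⟩
  congr 1
  · rw [T0_def, T0_def,
      tsum_mul_tsum_of_summable_norm (summable_norm_g0 h2E huv) (summable_norm_g0 h2E huv')]
    apply tsum_congr
    rintro ⟨s, d⟩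
    show g0 E (Complex.exp α) (s + d) * g0 E (Complex.exp β) (s - d)
      = g0 (2 * E) (Complex.exp α * Complex.exp β) s
        * g0 (2 * E) (Complex.exp α / Complex.exp β) d
    simp only [g0, g1, ← Complex.exp_add, ← Complex.exp_sub, ← Complex.exp_int_mul]
    congr 1
    push_cast
    ring
  · rw [T1_def, T1_def,
      tsum_mul_tsum_of_summable_norm (summable_norm_g1 h2E huv) (summable_norm_g1 h2E huv'),
      ← tsum_mul_left]
    apply tsum_congr
    rintro ⟨s, d⟩
    show g0 E (Complex.exp α) (s + d + 1) * g0 E (Complex.exp β) (s - d)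
      = Complex.exp E * (g1 (2 * E) (Complex.exp α * Complex.exp β) s
        * g1 (2 * E) (Complex.exp α / Complex.exp β) d)
    simp only [g0, g1, ← Complex.exp_add, ← Complex.exp_sub, ← Complex.exp_int_mul]
    congr 1
    push_cast
    ring

lemma identity1 {E : ℂ} (hE : E.re < 0) {u v : ℂ} (hu : u ≠ 0) (hv : v ≠ 0) :
    T1 E u * T1 E v
      = T1 (2 * E) (u * v) * T0 (2 * E) (u / v)
        + T0 (2 * E) (u * v) * T1 (2 * E) (u / v) := by
  have h2E : (2 * E).re < 0 := by
    have h : (2 * E).re = 2 * E.re := by simp [Complex.mul_re]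
    rw [h]; linarith
  have huv : u * v ≠ 0 := mul_ne_zero hu hv
  have huv' : u / v ≠ 0 := div_ne_zero hu hv
  have hF : Summable (fun z : ℤ × ℤ => g1 E u z.1 * g1 E v z.2) :=
    summable_mul_of_summable_norm (summable_norm_g1 hE hu) (summable_norm_g1 hE hv)
  rw [T1_def E u, T1_def E v,
    tsum_mul_tsum_of_summable_norm (summable_norm_g1 hE hu) (summable_norm_g1 hE hv),
    tsum_split sq1 _ hF]
  obtain ⟨α, rfl⟩ : ∃ α, Complex.exp α = u := ⟨Complex.log u, Complex.exp_log hu⟩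
  obtain ⟨β, rfl⟩ : ∃ β, Complex.exp β = v := ⟨Complex.log v, Complex.exp_log hv⟩
  congr 1
  · rw [T1_def, T0_def,
      tsum_mul_tsum_of_summable_norm (summable_norm_g1 h2E huv) (summable_norm_g0 h2E huv')]
    apply tsum_congr
    rintro ⟨s, d⟩
    show g1 E (Complex.exp α) (s + d) * g1 E (Complex.exp β) (s - d)
      = g1 (2 * E) (Complex.exp α * Complex.exp β) s
        * g0 (2 * E) (Complex.exp α / Complex.exp β) d
    simp only [g0, g1, ← Complex.exp_add, ← Complex.exp_sub, ← Complex.exp_int_mul]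
    congr 1
    push_cast
    ring
  · rw [T0_def, T1_def,
      tsum_mul_tsum_of_summable_norm (summable_norm_g0 h2E huv) (summable_norm_g1 h2E huv')]
    apply tsum_congr
    rintro ⟨s, d⟩
    show g1 E (Complex.exp α) (s + d) * g1 E (Complex.exp β) (s - d - 1)
      = g0 (2 * E) (Complex.exp α * Complex.exp β) s
        * g1 (2 * E) (Complex.exp α / Complex.exp β) d
    simp only [g0, g1, ← Complex.exp_add, ← Complex.exp_sub, ← Complex.exp_int_mul]
    congr 1
    push_cast
    ring

/-! ### Theta nulls -/

lemma I_zpow_four_mul (n : ℤ) : (I : ℂ) ^ (4 * n) = 1 := by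
  rw [zpow_mul]
  have h4 : (I : ℂ) ^ (4 : ℤ) = 1 := by
    rw [show (4 : ℤ) = ((4 : ℕ) : ℤ) from rfl, zpow_natCast]
    simp [pow_succ, Complex.I_mul_I]
  rw [h4, one_zpow]

lemma T1_I (E : ℂ) : T1 E I = 0 := by
  have h : ∀ n : ℤ, g1 E I (-1 - n) = -g1 E I n := by
    intro n
    simp only [g1]
    have hI : (I : ℂ) ^ (2 * (-1 - n) + 1) = -(I ^ (2 * n + 1)) := by
      have h1 : 2 * (-1 - n) + 1 = -(2 * n + 1) := by ring
      rw [h1, zpow_neg]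
      have h2 : (I : ℂ) ^ (2 * n + 1) * I ^ (2 * n + 1) = -1 := by
        rw [← zpow_add₀ Complex.I_ne_zero,
          show (2 * n + 1) + (2 * n + 1) = 4 * n + 2 from by ring,
          zpow_add₀ Complex.I_ne_zero, I_zpow_four_mul, one_mul,
          show (2 : ℤ) = ((2 : ℕ) : ℤ) from rfl, zpow_natCast, Complex.I_sq]
      exact inv_eq_of_mul_eq_one_right (by rw [mul_neg, h2, neg_neg])
    rw [hI,
      show ((-1 - n : ℤ) : ℂ) ^ 2 + ((-1 - n : ℤ) : ℂ) = (n : ℂ) ^ 2 + n from by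
        push_cast; ring]
    ring
  have h2 : T1 E I = ∑' n : ℤ, g1 E I (-1 - n) :=
    ((Equiv.subLeft (-1 : ℤ)).tsum_eq (g1 E I)).symm
  have h3 : T1 E I = -T1 E I := by
    calc T1 E I = ∑' n : ℤ, g1 E I (-1 - n) := h2
      _ = ∑' n : ℤ, -g1 E I n := tsum_congr h
      _ = -T1 E I := by rw [tsum_neg, T1_def]
  linear_combination (1 / 2 : ℂ) * h3

lemma AC_identity {E : ℂ} (hE : E.re < 0) :
    T0 E I * T0 E 1 = T0 (2 * E) I * T0 (2 * E) I := by
  have h := identity0 hE Complex.I_ne_zero (one_ne_zero (α := ℂ))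
  simpa [T1_I] using h

lemma null_sum {E : ℂ} (hE : E.re < 0) :
    T0 (4 * E) 1 + Complex.exp E * T1 (4 * E) 1 = T0 E 1 := by
  have hs : Summable (g0 E (1 : ℂ)) := summable_g0 hE one_ne_zero
  have h := tsum_split' psq (g0 E 1) hs
  rw [T0_def (4 * E), T1_def, T0_def E, h]
  congr 1
  · apply tsum_congr
    intro n
    show g0 (4 * E) 1 n = g0 E 1 (2 * n)
    simp only [g0, one_zpow, one_mul]
    congr 1
    push_cast
    ring
  · rw [← tsum_mul_left]
    apply tsum_congr
    intro n
    show Complex.exp E * g1 (4 * E) 1 n = g0 E 1 (2 * n + 1)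
    simp only [g0, g1, one_zpow, one_mul, ← Complex.exp_add]
    congr 1
    push_cast
    ring

lemma null_diff {E : ℂ} (hE : E.re < 0) :
    T0 (4 * E) 1 - Complex.exp E * T1 (4 * E) 1 = T0 E I := by
  have hs : Summable (g0 E I) := summable_g0 hE Complex.I_ne_zero
  have h := tsum_split' psq (g0 E I) hs
  rw [sub_eq_add_neg, ← neg_mul, T0_def (4 * E), T1_def, T0_def E, h]
  congr 1
  · apply tsum_congr
    intro n
    show g0 (4 * E) 1 n = g0 E I (2 * n)
    simp only [g0, one_zpow, one_mul]
    rw [show 2 * (2 * n) = 4 * n from by ring, I_zpow_four_mul, one_mul]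
    congr 1
    push_cast
    ring
  · rw [← tsum_mul_left]
    apply tsum_congr
    intro n
    show -Complex.exp E * g1 (4 * E) 1 n = g0 E I (2 * n + 1)
    simp only [g0, g1, one_zpow, one_mul]
    rw [show 2 * (2 * n + 1) = 4 * n + 2 from by ring, zpow_add₀ Complex.I_ne_zero,
      I_zpow_four_mul, one_mul, show (2 : ℤ) = ((2 : ℕ) : ℤ) from rfl, zpow_natCast,
      Complex.I_sq]
    rw [neg_one_mul, neg_mul, ← Complex.exp_add]
    congr 2
    push_cast
    ring

/-! ### Geometric tail bounds -/

lemma norm_tsum_le {f : ℕ → ℂ} {a r : ℝ} (hr0 : 0 ≤ r) (hr1 : r < 1)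
    (h : ∀ n, ‖f n‖ ≤ a * r ^ (n + 1)) : ‖∑' n, f n‖ ≤ a * r / (1 - r) := by
  have hg : HasSum (fun n : ℕ => a * r * r ^ n) (a * r * (1 - r)⁻¹) :=
    (hasSum_geometric_of_lt_one hr0 hr1).mul_left (a * r)
  have hb : ∀ n : ℕ, ‖f n‖ ≤ a * r * r ^ n := by
    intro n
    calc ‖f n‖ ≤ a * r ^ (n + 1) := h n
      _ = a * r * r ^ n := by rw [pow_succ]; ring
  calc ‖∑' n, f n‖ ≤ a * r * (1 - r)⁻¹ := tsum_of_norm_bounded hg hb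
    _ = a * r / (1 - r) := by rw [div_eq_mul_inv]

lemma norm_g0' (E w : ℂ) (m : ℤ) :
    ‖g0 E w m‖ = ‖w‖ ^ (2 * m) * Real.exp (((m ^ 2 : ℤ) : ℝ) * E.re) := by
  have h := norm_term E w 0 0 m
  simpa [g0] using h

lemma norm_g1' (E w : ℂ) (m : ℤ) :
    ‖g1 E w m‖ = ‖w‖ ^ (2 * m + 1) * Real.exp (((m ^ 2 + m : ℤ) : ℝ) * E.re) := by
  have h := norm_term E w 1 1 m
  simpa [g1] using h

lemma summable_nat_pos {f : ℤ → ℂ} (hf : Summable f) : Summable fun n : ℕ => f ((n : ℤ) + 1) := by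
  apply hf.comp_injective (i := fun n : ℕ => (n : ℤ) + 1)
  intro a b h
  simpa using h

lemma summable_nat_neg {f : ℤ → ℂ} (hf : Summable f) :
    Summable fun n : ℕ => f (-((n : ℤ) + 1)) := by
  apply hf.comp_injective (i := fun n : ℕ => -((n : ℤ) + 1))
  intro a b h
  simp only at h
  omega

lemma summable_nat_neg2 {f : ℤ → ℂ} (hf : Summable f) :
    Summable fun n : ℕ => f (-((n : ℤ) + 2)) := by
  apply hf.comp_injective (i := fun n : ℕ => -((n : ℤ) + 2))
  intro a b h
  simp only at h
  omega

lemma tsum_int_decomp {f : ℤ → ℂ} (hf : Summable f) :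
    ∑' n : ℤ, f n = f 0 + (∑' n : ℕ, f ((n : ℤ) + 1)) + ∑' n : ℕ, f (-((n : ℤ) + 1)) := by
  have hp : Summable fun n : ℕ => f n := hf.comp_injective fun a b h => by simpa using h
  have hm : Summable fun n : ℕ => f (-((n : ℤ) + 1)) := summable_nat_neg hf
  rw [tsum_of_nat_of_neg_add_one hp hm, Summable.tsum_eq_zero_add hp]
  have he : ∀ n : ℕ, f (((n + 1 : ℕ) : ℤ)) = f ((n : ℤ) + 1) := fun n => by norm_cast
  rw [tsum_congr he]
  push_cast
  ring

lemma tsum_int_decomp2 {f : ℤ → ℂ} (hf : Summable f) :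
    ∑' n : ℤ, f n
      = f 0 + f (-1) + (∑' n : ℕ, f ((n : ℤ) + 1)) + ∑' n : ℕ, f (-((n : ℤ) + 2)) := by
  rw [tsum_int_decomp hf]
  have hm : Summable fun n : ℕ => f (-((n : ℤ) + 1)) := summable_nat_neg hf
  rw [Summable.tsum_eq_zero_add hm]
  have he : ∀ n : ℕ, f (-(((n + 1 : ℕ) : ℤ) + 1)) = f (-((n : ℤ) + 2)) := fun n => by
    norm_cast
  rw [tsum_congr he]
  push_cast
  ring

lemma C_ne_zero_small {E : ℂ} (hE : E.re < 0) (ht : Real.exp E.re ≤ 1 / 4) :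
    T0 E I ≠ 0 := by
  intro h0
  set t := Real.exp E.re with htdef
  have ht0 : 0 < t := Real.exp_pos _
  have ht1 : t < 1 := by linarith
  have hs : Summable (g0 E I) := summable_g0 hE Complex.I_ne_zero
  have hnorm : ∀ m : ℤ, ‖g0 E I m‖ = Real.exp (((m ^ 2 : ℤ) : ℝ) * E.re) := by
    intro m
    rw [norm_g0', Complex.norm_I, one_zpow, one_mul]
  have hpow : ∀ n : ℕ, (1 : ℝ) * t ^ (n + 1) = Real.exp (((n : ℝ) + 1) * E.re) := by
    intro n
    rw [one_mul, htdef, ← Real.exp_nat_mul]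
    congr 1
    push_cast
    ring
  have hb : ∀ (m : ℤ) (n : ℕ), m ^ 2 = ((n : ℤ) + 1) ^ 2 → ‖g0 E I m‖ ≤ 1 * t ^ (n + 1) := by
    intro m n hm
    rw [hnorm, hpow, hm]
    apply Real.exp_le_exp.2
    have h1 : ((n : ℝ) + 1) ≤ (((((n : ℤ) + 1) ^ 2 : ℤ)) : ℝ) := by push_cast; nlinarith
    nlinarith [h1]
  have hd := tsum_int_decomp hs
  rw [← T0_def, h0] at hd
  have hz : g0 E I 0 = 1 := by simp [g0]
  rw [hz] at hd
  have hb1 : ‖∑' n : ℕ, g0 E I ((n : ℤ) + 1)‖ ≤ 1 * t / (1 - t) :=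
    norm_tsum_le ht0.le ht1 fun n => hb _ n rfl
  have hb2 : ‖∑' n : ℕ, g0 E I (-((n : ℤ) + 1))‖ ≤ 1 * t / (1 - t) :=
    norm_tsum_le ht0.le ht1 fun n => hb _ n (by ring)
  have hsum : (1 : ℂ) = -((∑' n : ℕ, g0 E I ((n : ℤ) + 1)) + ∑' n : ℕ, g0 E I (-((n : ℤ) + 1))) := by
    linear_combination -hd
  have h1 : (1 : ℝ) ≤ 1 * t / (1 - t) + 1 * t / (1 - t) := by
    calc (1 : ℝ) = ‖(1 : ℂ)‖ := by simp
      _ = ‖(∑' n : ℕ, g0 E I ((n : ℤ) + 1)) + ∑' n : ℕ, g0 E I (-((n : ℤ) + 1))‖ := by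
          rw [hsum, norm_neg]
      _ ≤ _ := (norm_add_le _ _).trans (add_le_add hb1 hb2)
  have h2 : 1 * t / (1 - t) ≤ 1 / 3 := by
    rw [div_le_iff₀ (by linarith)]
    linarith
  linarith

lemma re_mul_ofNat (E : ℂ) (c : ℝ) : ((c : ℂ) * E).re = c * E.re := by
  simp [Complex.mul_re]

lemma C_ne_zero {E : ℂ} (hE : E.re < 0) : T0 E I ≠ 0 := by
  intro h0
  have key : ∀ k : ℕ, T0 (((2 ^ k : ℝ) : ℂ) * E) I = 0 := by
    intro k
    induction k with
    | zero => simpa using h0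
    | succ n ih =>
      have hFre : (((2 ^ n : ℝ) : ℂ) * E).re < 0 := by
        rw [re_mul_ofNat]
        have : (0 : ℝ) < 2 ^ n := by positivity
        nlinarith
      have h2 := AC_identity hFre
      rw [ih, zero_mul] at h2
      have h3 : T0 (2 * (((2 ^ n : ℝ) : ℂ) * E)) I = 0 := by
        have := mul_self_eq_zero.1 h2.symm
        exact this
      have h4 : 2 * (((2 ^ n : ℝ) : ℂ) * E) = ((2 ^ (n + 1) : ℝ) : ℂ) * E := by
        push_cast
        ring
      rwa [h4] at h3
  set t := Real.exp E.re with htdef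
  have ht0 : 0 < t := Real.exp_pos _
  have ht1 : t < 1 := Real.exp_lt_one_iff.2 hE
  obtain ⟨m, hm⟩ := exists_pow_lt_of_lt_one (show (0 : ℝ) < 1 / 4 by norm_num) ht1
  have hk := key m
  apply C_ne_zero_small (E := ((2 ^ m : ℝ) : ℂ) * E) ?_ ?_ hk
  · rw [re_mul_ofNat]
    have : (0 : ℝ) < 2 ^ m := by positivity
    nlinarith
  · rw [re_mul_ofNat]
    have h5 : Real.exp ((2 ^ m : ℝ) * E.re) = t ^ (2 ^ m : ℕ) := by
      rw [htdef, ← Real.exp_nat_mul]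
      congr 1
      push_cast
      ring
    rw [h5]
    calc t ^ (2 ^ m : ℕ) ≤ t ^ m := by
          apply pow_le_pow_of_le_one ht0.le ht1.le
          exact Nat.le_of_lt (Nat.lt_two_pow_self (n := m))
      _ ≤ 1 / 4 := hm.le

lemma A_ne_zero {E : ℂ} (hE : E.re < 0) : T0 E 1 ≠ 0 := by
  intro h0
  have h2E : (2 * E).re < 0 := by
    have h : (2 * E).re = 2 * E.re := by simp [Complex.mul_re]
    rw [h]; linarith
  have h := AC_identity hE
  rw [h0, mul_zero] at h
  exact C_ne_zero h2E (mul_self_eq_zero.1 h.symm)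

/-! ### Descent -/

lemma descent {E : ℂ} (hE : E.re < 0) {w : ℂ} (hw : w ≠ 0)
    (h0 : T0 E w = 0) (h1 : T1 E w = 0) :
    T0 (2 * E) (w ^ 2) = 0 ∧ T1 (2 * E) (w ^ 2) = 0 := by
  have hE2 : (E / 2).re < 0 := by
    have h : (E / 2).re = E.re / 2 := by
      rw [show E / 2 = ((1 / 2 : ℝ) : ℂ) * E from by push_cast; ring, re_mul_ofNat]
      ring
    rw [h]; linarith
  have hww : w * w = w ^ 2 := by ring
  have hw1 : w / w = 1 := div_self hw
  have i0 := identity0 hE hw hw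
  have i1 := identity1 hE hw hw
  rw [h0, hww, hw1, zero_mul] at i0
  rw [h1, hww, hw1, zero_mul] at i1
  set X := T0 (2 * E) (w ^ 2)
  set Y := T1 (2 * E) (w ^ 2)
  set A := T0 (2 * E) 1
  set B := T1 (2 * E) 1
  set x := Complex.exp (E / 2) with hxdef
  have hx : x * x = Complex.exp E := by
    rw [hxdef, ← Complex.exp_add]
    congr 1
    ring
  have hx0 : x ≠ 0 := Complex.exp_ne_zero _
  have h42 : 4 * (E / 2) = 2 * E := by ring
  have hsum := null_sum hE2
  have hdiff := null_diff hE2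
  rw [h42] at hsum hdiff
  have hP : A + x * B ≠ 0 := by
    rw [hsum]
    exact A_ne_zero hE2
  have hM : A - x * B ≠ 0 := by
    rw [hdiff]
    exact C_ne_zero hE2
  have e1 : X * A + Complex.exp E * (Y * B) = 0 := i0.symm
  have e2 : Y * A + X * B = 0 := i1.symm
  have f1 : (X + x * Y) * (A + x * B) = 0 := by
    linear_combination e1 + x * e2 + Y * B * hx
  have f2 : (X - x * Y) * (A - x * B) = 0 := by
    linear_combination e1 - x * e2 + Y * B * hx
  have g1 : X + x * Y = 0 := (mul_eq_zero.1 f1).resolve_right hP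
  have g2 : X - x * Y = 0 := (mul_eq_zero.1 f2).resolve_right hM
  constructor
  · linear_combination (1 / 2 : ℂ) * g1 + (1 / 2 : ℂ) * g2
  · have hY : x * Y = 0 := by linear_combination (1 / 2 : ℂ) * g1 - (1 / 2 : ℂ) * g2
    exact (mul_eq_zero.1 hY).resolve_left hx0

/-! ### Functional equations in `w` -/

lemma T0_inv {E : ℂ} (w : ℂ) : T0 E w⁻¹ = T0 E w := by
  have h : ∀ n : ℤ, g0 E w⁻¹ n = g0 E w (-n) := by
    intro n
    simp only [g0]
    rw [inv_zpow, ← zpow_neg]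
    congr 1
    · congr 1
      ring
    · congr 1
      push_cast
      ring
  calc T0 E w⁻¹ = ∑' n : ℤ, g0 E w (-n) := tsum_congr h
    _ = T0 E w := (Equiv.neg ℤ).tsum_eq (g0 E w)

lemma T1_inv {E : ℂ} (w : ℂ) : T1 E w⁻¹ = T1 E w := by
  have h : ∀ n : ℤ, g1 E w⁻¹ n = g1 E w (-1 - n) := by
    intro n
    simp only [g1]
    rw [inv_zpow, ← zpow_neg]
    congr 1
    · congr 1
      ring
    · congr 1
      push_cast
      ring
  calc T1 E w⁻¹ = ∑' n : ℤ, g1 E w (-1 - n) := tsum_congr h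
    _ = T1 E w := (Equiv.subLeft (-1 : ℤ)).tsum_eq (g1 E w)

lemma T0_shift {E : ℂ} {w : ℂ} (hw : w ≠ 0) :
    T0 E (Complex.exp E * w) = Complex.exp (-E) * w ^ (-2 : ℤ) * T0 E w := by
  obtain ⟨γ, rfl⟩ : ∃ γ, Complex.exp γ = w := ⟨Complex.log w, Complex.exp_log hw⟩
  have h : ∀ n : ℤ, g0 E (Complex.exp E * Complex.exp γ) n
      = Complex.exp (-E) * Complex.exp γ ^ (-2 : ℤ) * g0 E (Complex.exp γ) (n + 1) := by
    intro n
    simp only [g0, ← Complex.exp_add, ← Complex.exp_int_mul]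
    congr 1
    push_cast
    ring
  rw [T0_def, tsum_congr h]
  have h2 := (Equiv.addRight (1 : ℤ)).tsum_eq
    (fun m => Complex.exp (-E) * Complex.exp γ ^ (-2 : ℤ) * g0 E (Complex.exp γ) m)
  simp only [Equiv.coe_addRight] at h2
  rw [h2, tsum_mul_left, ← T0_def]

lemma T1_shift {E : ℂ} {w : ℂ} (hw : w ≠ 0) :
    T1 E (Complex.exp E * w) = Complex.exp (-E) * w ^ (-2 : ℤ) * T1 E w := by
  obtain ⟨γ, rfl⟩ : ∃ γ, Complex.exp γ = w := ⟨Complex.log w, Complex.exp_log hw⟩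
  have h : ∀ n : ℤ, g1 E (Complex.exp E * Complex.exp γ) n
      = Complex.exp (-E) * Complex.exp γ ^ (-2 : ℤ) * g1 E (Complex.exp γ) (n + 1) := by
    intro n
    simp only [g1, ← Complex.exp_add, ← Complex.exp_int_mul]
    congr 1
    push_cast
    ring
  rw [T1_def, tsum_congr h]
  have h2 := (Equiv.addRight (1 : ℤ)).tsum_eq
    (fun m => Complex.exp (-E) * Complex.exp γ ^ (-2 : ℤ) * g1 E (Complex.exp γ) m)
  simp only [Equiv.coe_addRight] at h2
  rw [h2, tsum_mul_left, ← T1_def]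

lemma zeros_shift {E : ℂ} {w : ℂ} (hw : w ≠ 0)
    (h0 : T0 E w = 0) (h1 : T1 E w = 0) (k : ℤ) :
    T0 E (Complex.exp (k * E) * w) = 0 ∧ T1 E (Complex.exp (k * E) * w) = 0 := by
  induction k using Int.induction_on with
  | zero => simpa using ⟨h0, h1⟩
  | succ n ih =>
    obtain ⟨ih0, ih1⟩ := ih
    have hu0 : Complex.exp (((n : ℤ) : ℂ) * E) * w ≠ 0 :=
      mul_ne_zero (Complex.exp_ne_zero _) hw
    have hrw : (((n : ℤ) + 1 : ℤ) : ℂ) * E = E + ((n : ℤ) : ℂ) * E := by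
      push_cast
      ring
    rw [hrw, Complex.exp_add, mul_assoc]
    constructor
    · rw [T0_shift hu0, ih0, mul_zero]
    · rw [T1_shift hu0, ih1, mul_zero]
  | pred n ih =>
    obtain ⟨ih0, ih1⟩ := ih
    have hu0' : Complex.exp (((-(n : ℤ) - 1 : ℤ) : ℂ) * E) * w ≠ 0 :=
      mul_ne_zero (Complex.exp_ne_zero _) hw
    have hrw : ((-(n : ℤ) : ℤ) : ℂ) * E = E + ((-(n : ℤ) - 1 : ℤ) : ℂ) * E := by
      push_cast
      ring
    rw [hrw, Complex.exp_add, mul_assoc] at ih0 ih1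
    have hc0 : Complex.exp (-E) * (Complex.exp (((-(n : ℤ) - 1 : ℤ) : ℂ) * E) * w) ^ (-2 : ℤ)
        ≠ 0 := mul_ne_zero (Complex.exp_ne_zero _) (zpow_ne_zero _ hu0')
    rw [T0_shift hu0'] at ih0
    rw [T1_shift hu0'] at ih1
    exact ⟨(mul_eq_zero.1 ih0).resolve_left hc0, (mul_eq_zero.1 ih1).resolve_left hc0⟩

/-! ### The small-`q` contradiction -/

lemma rexp_zpow (x : ℝ) (n : ℤ) : Real.exp ((n : ℝ) * x) = Real.exp x ^ n := by
  rcases n with m | m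
  · rw [Int.ofNat_eq_coe, zpow_natCast, ← Real.exp_nat_mul]
    norm_num
  · rw [zpow_negSucc, ← Real.exp_nat_mul, ← Real.exp_neg]
    congr 1
    push_cast
    ring

/-- Zeros can be moved into the annulus `exp(E.re/2) ≤ ‖v‖ ≤ 1`. -/
lemma normalize_zero {E : ℂ} (hE : E.re < 0) {w : ℂ} (hw : w ≠ 0)
    (h0 : T0 E w = 0) (h1 : T1 E w = 0) :
    ∃ v : ℂ, v ≠ 0 ∧ Real.exp (E.re / 2) ≤ ‖v‖ ∧ ‖v‖ ≤ 1 ∧ T0 E v = 0 ∧ T1 E v = 0 := by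
  set t := Real.exp E.re with htdef
  have ht0 : 0 < t := Real.exp_pos _
  have ht1 : t < 1 := Real.exp_lt_one_iff.2 hE
  set u := Real.exp (E.re / 2) with hudef
  have hu0 : 0 < u := Real.exp_pos _
  have huu : u * u = t := by
    rw [hudef, htdef, ← Real.exp_add]
    congr 1
    ring
  have hu1 : u < 1 := Real.exp_lt_one_iff.2 (by linarith)
  have hy : 1 < t⁻¹ := (one_lt_inv₀ ht0).2 ht1
  have hx : 0 < ‖w‖ / u := div_pos (norm_pos_iff.2 hw) hu0
  obtain ⟨n, hn1, hn2⟩ := exists_mem_Ico_zpow hx hy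
  set v₁ := Complex.exp ((n : ℂ) * E) * w with hv₁def
  obtain ⟨z0, z1⟩ := zeros_shift hw h0 h1 n
  have hv₁0 : v₁ ≠ 0 := mul_ne_zero (Complex.exp_ne_zero _) hw
  have hnorm : ‖v₁‖ = t ^ n * ‖w‖ := by
    rw [hv₁def, norm_mul]
    congr 1
    rw [Complex.norm_exp,
      show ((n : ℂ) * E).re = (n : ℝ) * E.re from by simp [Complex.mul_re],
      rexp_zpow]
  have htn : (0 : ℝ) < t ^ n := zpow_pos ht0 n
  have hinvn : (t⁻¹ : ℝ) ^ n = (t ^ n)⁻¹ := by rw [inv_zpow]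
  have h1v : u ≤ ‖v₁‖ := by
    rw [hnorm]
    rw [hinvn] at hn1
    have e4 : u * (‖w‖ / u) = ‖w‖ := by field_simp
    have h2 := mul_le_mul_of_nonneg_left hn1 hu0.le
    rw [e4] at h2
    have h3 := mul_le_mul_of_nonneg_right h2 htn.le
    rw [mul_assoc, inv_mul_cancel₀ (ne_of_gt htn), mul_one] at h3
    rw [mul_comm]
    exact h3
  have h2v : ‖v₁‖ * t < u := by
    rw [hnorm]
    have hn2' : ‖w‖ / u < (t⁻¹) ^ (n + 1) := hn2
    rw [inv_zpow] at hn2'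
    have htn1 : (0 : ℝ) < t ^ (n + 1) := zpow_pos ht0 _
    have h3 : ‖w‖ * t ^ (n + 1) < u := by
      have e4 : u * (‖w‖ / u) = ‖w‖ := by field_simp
      have h4 := mul_lt_mul_of_pos_right hn2' htn1
      rw [inv_mul_cancel₀ (ne_of_gt htn1)] at h4
      have h5 := mul_lt_mul_of_pos_left h4 hu0
      rw [← mul_assoc, e4, mul_one] at h5
      exact h5
    calc t ^ n * ‖w‖ * t = ‖w‖ * t ^ (n + 1) := by
          rw [zpow_add₀ (ne_of_gt ht0), zpow_one]
          ring
      _ < u := h3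
  by_cases hcase : ‖v₁‖ ≤ 1
  · exact ⟨v₁, hv₁0, h1v, hcase, z0, z1⟩
  · have hpos : 0 < ‖v₁‖ := norm_pos_iff.2 hv₁0
    refine ⟨v₁⁻¹, inv_ne_zero hv₁0, ?_, ?_, by rw [T0_inv]; exact z0, by rw [T1_inv]; exact z1⟩
    · rw [norm_inv]
      have hlt : ‖v₁‖ * u < 1 := by nlinarith [h2v, hu0, huu]
      have hinv : ‖v₁‖ * ‖v₁‖⁻¹ = 1 := mul_inv_cancel₀ (ne_of_gt hpos)
      nlinarith [hlt, hinv, hpos]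
    · rw [norm_inv]
      exact inv_le_one_of_one_le₀ (le_of_lt (not_le.1 hcase))

lemma no_common_zero_small {E : ℂ} (hE : E.re < 0) (ht : Real.exp E.re ≤ 1 / 16)
    {w : ℂ} (hw : w ≠ 0) (h0 : T0 E w = 0) (h1 : T1 E w = 0) : False := by
  set t := Real.exp E.re with htdef
  have ht0 : 0 < t := Real.exp_pos _
  have ht1 : t < 1 := by linarith
  set u := Real.exp (E.re / 2) with hudef
  have hu0 : 0 < u := Real.exp_pos _
  have huu : u * u = t := by
    rw [hudef, htdef, ← Real.exp_add]
    congr 1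
    ring
  have hu14 : u ≤ 1 / 4 := by nlinarith
  have hu1 : u < 1 := by linarith
  obtain ⟨v, hv0, hvl, hvu, hT0v, hT1v⟩ := normalize_zero hE hw h0 h1
  rw [← hudef] at hvl
  have hvpos : 0 < ‖v‖ := norm_pos_iff.2 hv0
  -- `u`-powers as exponentials
  have hupow : ∀ k : ℕ, u ^ k = Real.exp ((k : ℝ) * (E.re / 2)) := by
    intro k
    rw [hudef, ← Real.exp_nat_mul]
  have htpow : ∀ k : ℕ, t ^ k = Real.exp ((k : ℝ) * E.re) := by
    intro k
    rw [htdef, ← Real.exp_nat_mul]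
  -- Step A : `‖v + v⁻¹‖ ≤ 2 * (u / (1 - u))`
  have hsum1 : Summable (g1 E v) := summable_g1 hE hv0
  have hd1 := tsum_int_decomp2 hsum1
  rw [← T1_def, hT1v] at hd1
  have hg10 : g1 E v 0 = v := by
    simp [g1]
  have hg1m : g1 E v (-1) = v⁻¹ := by
    simp only [g1]
    norm_num
  rw [hg10, hg1m] at hd1
  have hA1 : ∀ n : ℕ, ‖g1 E v ((n : ℤ) + 1)‖ ≤ 1 * u ^ (n + 1) := by
    intro n
    rw [norm_g1']
    have e1 : (2 * ((n : ℤ) + 1) + 1) = ((2 * n + 3 : ℕ) : ℤ) := by push_cast; ring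
    rw [e1, zpow_natCast]
    have b1 : ‖v‖ ^ (2 * n + 3) ≤ 1 := pow_le_one₀ (norm_nonneg _) hvu
    have b2 : Real.exp (((((n : ℤ) + 1) ^ 2 + ((n : ℤ) + 1) : ℤ) : ℝ) * E.re) ≤ u ^ (n + 1) := by
      rw [hupow]
      apply Real.exp_le_exp.2
      push_cast
      have hn0 : (0 : ℝ) ≤ (n : ℝ) := Nat.cast_nonneg n
      have hEn : (0 : ℝ) ≤ -E.re := by linarith
      nlinarith [mul_nonneg (mul_nonneg hn0 hn0) hEn, mul_nonneg hn0 hEn, hEn]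
    calc ‖v‖ ^ (2 * n + 3) * Real.exp (((((n : ℤ) + 1) ^ 2 + ((n : ℤ) + 1) : ℤ) : ℝ) * E.re)
        ≤ 1 * (u ^ (n + 1)) := by
          apply mul_le_mul b1 b2 (Real.exp_pos _).le zero_le_one
      _ = 1 * u ^ (n + 1) := by ring
  have hA2 : ∀ n : ℕ, ‖g1 E v (-((n : ℤ) + 2))‖ ≤ 1 * u ^ (n + 1) := by
    intro n
    rw [norm_g1']
    have e1 : (2 * (-((n : ℤ) + 2)) + 1) = -((2 * n + 3 : ℕ) : ℤ) := by push_cast; ring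
    rw [e1, zpow_neg, zpow_natCast]
    have b1 : (‖v‖ ^ (2 * n + 3))⁻¹ ≤ (u ^ (2 * n + 3))⁻¹ := by
      apply inv_anti₀ (pow_pos hu0 _)
      exact pow_le_pow_left₀ hu0.le hvl _
    have b0 : (0 : ℝ) ≤ (‖v‖ ^ (2 * n + 3))⁻¹ := by positivity
    have b2 : (u ^ (2 * n + 3))⁻¹
        * Real.exp ((((-((n : ℤ) + 2)) ^ 2 + (-((n : ℤ) + 2)) : ℤ) : ℝ) * E.re)
        ≤ u ^ (n + 1) := by
      rw [inv_mul_le_iff₀ (pow_pos hu0 _), ← pow_add, hupow]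
      apply Real.exp_le_exp.2
      push_cast
      have hn0 : (0 : ℝ) ≤ (n : ℝ) := Nat.cast_nonneg n
      have hEn : (0 : ℝ) ≤ -E.re := by linarith
      nlinarith [mul_nonneg (mul_nonneg hn0 hn0) hEn, mul_nonneg hn0 hEn, hEn]
    calc (‖v‖ ^ (2 * n + 3))⁻¹
          * Real.exp ((((-((n : ℤ) + 2)) ^ 2 + (-((n : ℤ) + 2)) : ℤ) : ℝ) * E.re)
        ≤ (u ^ (2 * n + 3))⁻¹
          * Real.exp ((((-((n : ℤ) + 2)) ^ 2 + (-((n : ℤ) + 2)) : ℤ) : ℝ) * E.re) := by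
          apply mul_le_mul_of_nonneg_right b1 (Real.exp_pos _).le
      _ ≤ u ^ (n + 1) := b2
      _ = 1 * u ^ (n + 1) := (one_mul _).symm
  have hS1 : ‖∑' n : ℕ, g1 E v ((n : ℤ) + 1)‖ ≤ 1 * u / (1 - u) :=
    norm_tsum_le hu0.le hu1 hA1
  have hS2 : ‖∑' n : ℕ, g1 E v (-((n : ℤ) + 2))‖ ≤ 1 * u / (1 - u) :=
    norm_tsum_le hu0.le hu1 hA2
  have hfrac : 1 * u / (1 - u) ≤ 1 / 3 := by
    rw [div_le_iff₀ (by linarith)]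
    linarith
  have hvv : ‖v + v⁻¹‖ ≤ 2 / 3 := by
    have hx : v + v⁻¹ = -((∑' n : ℕ, g1 E v ((n : ℤ) + 1)) + ∑' n : ℕ, g1 E v (-((n : ℤ) + 2))) := by
      linear_combination -hd1
    rw [hx, norm_neg]
    calc ‖(∑' n : ℕ, g1 E v ((n : ℤ) + 1)) + ∑' n : ℕ, g1 E v (-((n : ℤ) + 2))‖
        ≤ 1 * u / (1 - u) + 1 * u / (1 - u) := (norm_add_le _ _).trans (add_le_add hS1 hS2)
      _ ≤ 1 / 3 + 1 / 3 := add_le_add hfrac hfrac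
      _ = 2 / 3 := by norm_num
  have hv2 : ‖v ^ 2 + 1‖ ≤ 2 / 3 := by
    have hid : v ^ 2 + 1 = v * (v + v⁻¹) := by
      field_simp
    rw [hid, norm_mul]
    calc ‖v‖ * ‖v + v⁻¹‖ ≤ 1 * (2 / 3) :=
        mul_le_mul hvu hvv (norm_nonneg _) zero_le_one
      _ = 2 / 3 := by norm_num
  have hv3 : 1 / 3 ≤ ‖v‖ ^ 2 := by
    have h4 : ‖(1 : ℂ)‖ - ‖v ^ 2 + 1‖ ≤ ‖1 - (v ^ 2 + 1)‖ := norm_sub_norm_le _ _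
    rw [show (1 : ℂ) - (v ^ 2 + 1) = -v ^ 2 from by ring] at h4
    rw [norm_neg, norm_pow] at h4
    rw [norm_one] at h4
    linarith
  -- Step B : contradiction from `T0 E v = 0`
  have hsum0 : Summable (g0 E v) := summable_g0 hE hv0
  have hd0 := tsum_int_decomp hsum0
  rw [← T0_def, hT0v] at hd0
  have hg00 : g0 E v 0 = 1 := by simp [g0]
  rw [hg00] at hd0
  have hB1 : ∀ n : ℕ, ‖g0 E v ((n : ℤ) + 1)‖ ≤ 1 * (3 / 16) ^ (n + 1) := by
    intro n
    rw [norm_g0']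
    have e1 : (2 * ((n : ℤ) + 1)) = ((2 * n + 2 : ℕ) : ℤ) := by push_cast; ring
    rw [e1, zpow_natCast]
    have b1 : ‖v‖ ^ (2 * n + 2) ≤ 1 := pow_le_one₀ (norm_nonneg _) hvu
    have b2 : Real.exp (((((n : ℤ) + 1) ^ 2 : ℤ) : ℝ) * E.re) ≤ (3 / 16) ^ (n + 1) := by
      have b3 : Real.exp (((((n : ℤ) + 1) ^ 2 : ℤ) : ℝ) * E.re) ≤ t ^ (n + 1) := by
        rw [htpow]
        apply Real.exp_le_exp.2
        push_cast
        have hn0 : (0 : ℝ) ≤ (n : ℝ) := Nat.cast_nonneg n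
        have hEn : (0 : ℝ) ≤ -E.re := by linarith
        nlinarith [mul_nonneg (mul_nonneg hn0 hn0) hEn, mul_nonneg hn0 hEn, hEn]
      calc Real.exp (((((n : ℤ) + 1) ^ 2 : ℤ) : ℝ) * E.re) ≤ t ^ (n + 1) := b3
        _ ≤ (3 / 16) ^ (n + 1) := pow_le_pow_left₀ ht0.le (by linarith) _
    calc ‖v‖ ^ (2 * n + 2) * Real.exp (((((n : ℤ) + 1) ^ 2 : ℤ) : ℝ) * E.re)
        ≤ 1 * ((3 / 16) ^ (n + 1)) := mul_le_mul b1 b2 (Real.exp_pos _).le zero_le_one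
      _ = 1 * (3 / 16) ^ (n + 1) := by ring
  have hB2 : ∀ n : ℕ, ‖g0 E v (-((n : ℤ) + 1))‖ ≤ 1 * (3 / 16) ^ (n + 1) := by
    intro n
    rw [norm_g0']
    have e1 : (2 * (-((n : ℤ) + 1))) = -((2 * (n + 1) : ℕ) : ℤ) := by push_cast; ring
    rw [e1, zpow_neg, zpow_natCast]
    have hv2n : ‖v‖ ^ (2 * (n + 1)) = (‖v‖ ^ 2) ^ (n + 1) := by rw [← pow_mul, mul_comm]
    have b1 : (‖v‖ ^ (2 * (n + 1)))⁻¹ ≤ 3 ^ (n + 1) := by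
      rw [hv2n]
      have h5 : (1 / 3 : ℝ) ^ (n + 1) ≤ (‖v‖ ^ 2) ^ (n + 1) :=
        pow_le_pow_left₀ (by norm_num) hv3 _
      have h6 : (0 : ℝ) < (‖v‖ ^ 2) ^ (n + 1) := by positivity
      have h7 : ((1 / 3 : ℝ) ^ (n + 1))⁻¹ = 3 ^ (n + 1) := by
        rw [← inv_pow]
        norm_num
      calc ((‖v‖ ^ 2) ^ (n + 1))⁻¹ ≤ ((1 / 3 : ℝ) ^ (n + 1))⁻¹ :=
          inv_anti₀ (by positivity) h5
        _ = 3 ^ (n + 1) := h7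
    have b2 : Real.exp ((((-((n : ℤ) + 1)) ^ 2 : ℤ) : ℝ) * E.re) ≤ t ^ (n + 1) := by
      rw [htpow]
      apply Real.exp_le_exp.2
      push_cast
      have hn0 : (0 : ℝ) ≤ (n : ℝ) := Nat.cast_nonneg n
      have hEn : (0 : ℝ) ≤ -E.re := by linarith
      nlinarith [mul_nonneg (mul_nonneg hn0 hn0) hEn, mul_nonneg hn0 hEn, hEn]
    calc (‖v‖ ^ (2 * (n + 1)))⁻¹ * Real.exp ((((-((n : ℤ) + 1)) ^ 2 : ℤ) : ℝ) * E.re)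
        ≤ 3 ^ (n + 1) * t ^ (n + 1) := by
          apply mul_le_mul b1 b2 (Real.exp_pos _).le (by positivity)
      _ = (3 * t) ^ (n + 1) := by rw [mul_pow]
      _ ≤ (3 / 16) ^ (n + 1) := pow_le_pow_left₀ (by linarith) (by linarith) _
      _ = 1 * (3 / 16) ^ (n + 1) := (one_mul _).symm
  have hS3 : ‖∑' n : ℕ, g0 E v ((n : ℤ) + 1)‖ ≤ 1 * (3 / 16) / (1 - 3 / 16) :=
    norm_tsum_le (by norm_num) (by norm_num) hB1
  have hS4 : ‖∑' n : ℕ, g0 E v (-((n : ℤ) + 1))‖ ≤ 1 * (3 / 16) / (1 - 3 / 16) :=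
    norm_tsum_le (by norm_num) (by norm_num) hB2
  have hone : (1 : ℂ) = -((∑' n : ℕ, g0 E v ((n : ℤ) + 1)) + ∑' n : ℕ, g0 E v (-((n : ℤ) + 1))) := by
    linear_combination -hd0
  have hfinal : (1 : ℝ) ≤ 6 / 13 := by
    calc (1 : ℝ) = ‖(1 : ℂ)‖ := by simp
      _ = ‖(∑' n : ℕ, g0 E v ((n : ℤ) + 1)) + ∑' n : ℕ, g0 E v (-((n : ℤ) + 1))‖ := by
          rw [hone, norm_neg]
      _ ≤ 1 * (3 / 16) / (1 - 3 / 16) + 1 * (3 / 16) / (1 - 3 / 16) :=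
          (norm_add_le _ _).trans (add_le_add hS3 hS4)
      _ = 6 / 13 := by norm_num
  linarith

lemma no_common_zero {E : ℂ} (hE : E.re < 0) {w : ℂ} (hw : w ≠ 0)
    (h0 : T0 E w = 0) (h1 : T1 E w = 0) : False := by
  have key : ∀ k : ℕ, T0 (((2 ^ k : ℝ) : ℂ) * E) (w ^ (2 ^ k : ℕ)) = 0
      ∧ T1 (((2 ^ k : ℝ) : ℂ) * E) (w ^ (2 ^ k : ℕ)) = 0 := by
    intro k
    induction k with
    | zero => simpa using ⟨h0, h1⟩
    | succ n ih =>
      obtain ⟨ih0, ih1⟩ := ih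
      have hFre : (((2 ^ n : ℝ) : ℂ) * E).re < 0 := by
        rw [re_mul_ofNat]
        have : (0 : ℝ) < 2 ^ n := by positivity
        nlinarith
      have hwn : w ^ (2 ^ n : ℕ) ≠ 0 := pow_ne_zero _ hw
      obtain ⟨d0, d1⟩ := descent hFre hwn ih0 ih1
      have e1 : 2 * (((2 ^ n : ℝ) : ℂ) * E) = ((2 ^ (n + 1) : ℝ) : ℂ) * E := by
        push_cast
        ring
      have e2 : (w ^ (2 ^ n : ℕ)) ^ 2 = w ^ (2 ^ (n + 1) : ℕ) := by
        rw [← pow_mul, pow_succ]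
      rw [e1, e2] at d0 d1
      exact ⟨d0, d1⟩
  set t := Real.exp E.re with htdef
  have ht0 : 0 < t := Real.exp_pos _
  have ht1 : t < 1 := Real.exp_lt_one_iff.2 hE
  obtain ⟨m, hm⟩ := exists_pow_lt_of_lt_one (show (0 : ℝ) < 1 / 16 by norm_num) ht1
  obtain ⟨k0, k1⟩ := key m
  have hFre : (((2 ^ m : ℝ) : ℂ) * E).re < 0 := by
    rw [re_mul_ofNat]
    have : (0 : ℝ) < 2 ^ m := by positivity
    nlinarith
  refine no_common_zero_small hFre ?_ (pow_ne_zero _ hw) k0 k1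
  rw [re_mul_ofNat]
  have h5 : Real.exp ((2 ^ m : ℝ) * E.re) = t ^ (2 ^ m : ℕ) := by
    rw [htdef, ← Real.exp_nat_mul]
    congr 1
    push_cast
    ring
  rw [h5]
  calc t ^ (2 ^ m : ℕ) ≤ t ^ m := by
        apply pow_le_pow_of_le_one ht0.le ht1.le
        exact Nat.le_of_lt (Nat.lt_two_pow_self (n := m))
    _ ≤ 1 / 16 := hm.le

end ThetaAux

end

/-- The theta function `θ⁰(w) = ∑_{n ∈ ℤ} w^{2n} q^{n²}` (principal-branch powers of `q`). -/
noncomputable def theta0 (q w : ℂ) : ℂ :=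
  ∑' n : ℤ, w ^ (2 * n) * q ^ ((n : ℂ) ^ 2)

/-- The theta function `θ¹(w) = ∑_{n ∈ ℤ} w^{2n+1} q^{(n+1/2)²}` (principal-branch powers of `q`). -/
noncomputable def theta1 (q w : ℂ) : ℂ :=
  ∑' n : ℤ, w ^ (2 * n + 1) * q ^ (((n : ℂ) + 1 / 2) ^ 2)

theorem theta_no_common_zero (q : ℂ) (hq0 : 0 < ‖q‖) (hq1 : ‖q‖ < 1)
    (w₀ : ℂ) (hw₀ : w₀ ≠ 0) :
    ¬(theta0 q w₀ = 0 ∧ theta1 q w₀ = 0) := by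
  rintro ⟨h0, h1⟩
  have hq : q ≠ 0 := by
    intro h
    rw [h] at hq0
    simp at hq0
  set E := Complex.log q with hE
  have hEre : E.re < 0 := by
    rw [hE, Complex.log_re]
    exact Real.log_neg hq0 hq1
  have ht0 : theta0 q w₀ = ThetaAux.T0 E w₀ := by
    rw [theta0, ThetaAux.T0_def]
    apply tsum_congr
    intro n
    simp only [ThetaAux.g0]
    congr 1
    rw [Complex.cpow_def_of_ne_zero hq]
    congr 1
    ring
  have ht1 : theta1 q w₀ = Complex.exp (E / 4) * ThetaAux.T1 E w₀ := by
    rw [theta1, ThetaAux.T1_def, ← tsum_mul_left]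
    apply tsum_congr
    intro n
    simp only [ThetaAux.g1]
    rw [Complex.cpow_def_of_ne_zero hq, mul_comm (Complex.exp (E / 4)), mul_assoc,
      ← Complex.exp_add]
    congr 1
    rw [← hE]
    ring
  rw [ht0] at h0
  rw [ht1] at h1
  have h1' : ThetaAux.T1 E w₀ = 0 :=
    (mul_eq_zero.1 h1).resolve_left (Complex.exp_ne_zero _)
  exact ThetaAux.no_common_zero hEre hw₀ h0 h1'

/-- If two sections `σ⁰θ⁰ + σ¹θ¹` and `τ⁰θ⁰ + τ¹θ¹` with `(σ⁰,σ¹) ≠ (0,0)`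
vanish at the same point `w₀ ≠ 0`, then `(τ⁰,τ¹)` is a scalar multiple of `(σ⁰,σ¹)`. -/
theorem sections_with_common_zero_proportional (q : ℂ) (hq0 : 0 < ‖q‖)
    (hq1 : ‖q‖ < 1) (w₀ : ℂ) (hw₀ : w₀ ≠ 0)
    (σ0 σ1 τ0 τ1 : ℂ) (hσ : (σ0, σ1) ≠ (0, 0))
    (hσzero : σ0 * theta0 q w₀ + σ1 * theta1 q w₀ = 0)
    (hτzero : τ0 * theta0 q w₀ + τ1 * theta1 q w₀ = 0) :
    ∃ c : ℂ, (τ0, τ1) = (c * σ0, c * σ1) := by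
  have hXY := theta_no_common_zero q hq0 hq1 w₀ hw₀
  set X := theta0 q w₀
  set Y := theta1 q w₀
  have hD : σ0 * τ1 - σ1 * τ0 = 0 := by
    by_contra hD
    apply hXY
    constructor
    · have h1 : (σ0 * τ1 - σ1 * τ0) * X = 0 := by linear_combination τ1 * hσzero - σ1 * hτzero
      exact (mul_eq_zero.1 h1).resolve_left hD
    · have h2 : (σ0 * τ1 - σ1 * τ0) * Y = 0 := by linear_combination σ0 * hτzero - τ0 * hσzero
      exact (mul_eq_zero.1 h2).resolve_left hD
  by_cases h0 : σ0 = 0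
  · have h1 : σ1 ≠ 0 := by
      intro h1; exact hσ (by simp [h0, h1])
    refine ⟨τ1 / σ1, ?_⟩
    have hτ0 : τ0 = 0 := by
      have := hD
      rw [h0] at this
      simpa [h1] using this
    simp [h0, hτ0, div_mul_cancel₀, h1]
  · refine ⟨τ0 / σ0, ?_⟩
    have h2 : τ0 / σ0 * σ0 = τ0 := div_mul_cancel₀ _ h0
    have h3 : τ0 / σ0 * σ1 = τ1 := by
      field_simp
      linear_combination -hD
    rw [Prod.mk.injEq]
    exact ⟨h2.symm, h3.symm⟩
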